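/- Let G be a finite p-group of p-class c and C a central extension 1 → K → C → G → 1 with K = P_c(C) (so C is an immediate descendant of G). If the abelianization of G equals the abelianization of G/P_{c−1}(G), then K is contained in the derived subgroup of C; hence C is a stem extension of G. -/

import Mathlib

open scoped commutatorElement

/-- The lower `p`-central series: `P₀(G) = G`, `P_{n+1}(G) = [G,P_n(G)]·P_n(G)^p`. -/
def lowerPCentral (p : ℕ) (G : Type*) [Group G] : ℕ → Subgroup G
  | 0 => ⊤
  | n + 1 => Subgroup.normalClosure
      ({x | ∃ y ∈ lowerPCentral p G n, x = y ^ p} ∪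
       {x | ∃ g : G, ∃ y ∈ lowerPCentral p G n, x = ⁅g, y⁆})

instance lowerPCentral_normal (p : ℕ) (G : Type*) [Group G] :
    ∀ n : ℕ, (lowerPCentral p G n).Normal
  | 0 => inferInstanceAs (⊤ : Subgroup G).Normal
  | _ + 1 => Subgroup.normalClosure_normal

/-- Surjective homomorphisms map the lower p-central series onto the lower p-central series. -/
lemma lowerPCentral_map (p : ℕ) {G C : Type*} [Group G] [Group C]
    (π : C →* G) (hsurj : Function.Surjective π) :
    ∀ n : ℕ, Subgroup.map π (lowerPCentral p C n) = lowerPCentral p G n := by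
  intro n
  induction n with
  | zero => simpa [lowerPCentral] using Subgroup.map_top_of_surjective π hsurj
  | succ n ih =>
    show Subgroup.map π (Subgroup.normalClosure _) = Subgroup.normalClosure _
    rw [Subgroup.map_normalClosure _ _ hsurj]
    congr 1
    ext x
    constructor
    · rintro ⟨z, hz | hz, rfl⟩
      · obtain ⟨y, hy, rfl⟩ := hz
        exact Or.inl ⟨π y, ih ▸ ⟨y, hy, rfl⟩, by rw [map_pow]⟩
      · obtain ⟨g, y, hy, rfl⟩ := hz
        exact Or.inr ⟨π g, π y, ih ▸ ⟨y, hy, rfl⟩, by rw [map_commutatorElement]⟩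
    · rintro (⟨y, hy, rfl⟩ | ⟨g, y, hy, rfl⟩)
      · rw [← ih] at hy
        obtain ⟨z, hz, rfl⟩ := hy
        exact ⟨z ^ p, Or.inl ⟨z, hz, rfl⟩, by rw [map_pow]⟩
      · rw [← ih] at hy
        obtain ⟨z, hz, rfl⟩ := hy
        obtain ⟨h, rfl⟩ := hsurj g
        exact ⟨⁅h, z⁆, Or.inr ⟨h, z, hz, rfl⟩, by rw [map_commutatorElement]⟩

/-- Let `G` be a finite `p`-group of `p`-class `c` and `C` an immediate
descendant of `G`, i.e. `C` has `p`-class `c+1` and `C/P_c(C) ≅ G` via `π` with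
`ker π = P_c(C)`. If the abelianization of `G` equals that of `G/P_{c−1}(G)`
(i.e. `P_{c−1}(G) ≤ [G,G]`), then `K = ker π` is contained in the derived subgroup
(and the center) of `C`, so `C` is a stem extension of `G`. -/
theorem stmt_10 {p : ℕ} [Fact p.Prime] {G C : Type*} [Group G] [Group C]
    [Finite G] [Finite C] (hG : IsPGroup p G) (hC : IsPGroup p C)
    {c : ℕ} (hc1 : 1 ≤ c) (hclass : IsLeast {n | lowerPCentral p G n = ⊥} c)
    (π : C →* G) (hsurj : Function.Surjective π)
    (hker : π.ker = lowerPCentral p C c)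
    (hCclass : lowerPCentral p C (c + 1) = ⊥)
    (hab : lowerPCentral p G (c - 1) ≤ commutator G) :
    π.ker ≤ commutator C ⊓ Subgroup.center C := by
  -- K := P_c(C) is central and of exponent p
  have hcentral : lowerPCentral p C c ≤ Subgroup.center C := by
    intro k hk
    rw [Subgroup.mem_center_iff]
    intro g
    have : ⁅g, k⁆ ∈ lowerPCentral p C (c + 1) :=
      Subgroup.subset_normalClosure (Or.inr ⟨g, k, hk, rfl⟩)
    rw [hCclass, Subgroup.mem_bot, commutatorElement_eq_one_iff_mul_comm] at this
    exact this
  have hexp : ∀ k ∈ lowerPCentral p C c, k ^ p = 1 := by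
    intro k hk
    have : k ^ p ∈ lowerPCentral p C (c + 1) :=
      Subgroup.subset_normalClosure (Or.inl ⟨k, hk, rfl⟩)
    rwa [hCclass, Subgroup.mem_bot] at this
  -- P_{c-1}(C) ≤ [C,C] ⊔ ker π
  have hpre : lowerPCentral p C (c - 1) ≤ commutator C ⊔ π.ker := by
    have hmapcomm : Subgroup.map π (commutator C) = commutator G := by
      rw [commutator_def, Subgroup.map_commutator,
        Subgroup.map_top_of_surjective π hsurj, commutator_def]
    calc lowerPCentral p C (c - 1)
        ≤ Subgroup.comap π (Subgroup.map π (lowerPCentral p C (c - 1))) :=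
          Subgroup.le_comap_map _ _
      _ = Subgroup.comap π (lowerPCentral p G (c - 1)) := by
          rw [lowerPCentral_map p π hsurj]
      _ ≤ Subgroup.comap π (commutator G) := Subgroup.comap_mono hab
      _ = Subgroup.comap π (Subgroup.map π (commutator C)) := by rw [hmapcomm]
      _ = commutator C ⊔ π.ker := Subgroup.comap_map_eq π (commutator C)
  -- hence P_c(C) ≤ [C,C]
  have hstem : lowerPCentral p C c ≤ commutator C := by
    have hc : c = (c - 1) + 1 := (Nat.succ_pred_eq_of_pos hc1).symm
    rw [hc]
    apply Subgroup.normalClosure_le_normal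
    rintro x (⟨y, hy, rfl⟩ | ⟨g, y, hy, rfl⟩)
    · -- y^p with y ∈ P_{c-1}(C)
      have hy' : y ∈ commutator C ⊔ π.ker := hpre hy
      rw [← SetLike.mem_coe, Subgroup.mul_normal] at hy'
      obtain ⟨d, hd, k, hk, rfl⟩ := hy'
      have hk' : k ∈ lowerPCentral p C c := hker ▸ hk
      have hcomm : Commute d k := (Subgroup.mem_center_iff.mp (hcentral hk') d)
      rw [hcomm.mul_pow, hexp k hk', mul_one]
      exact pow_mem hd p
    · exact Subgroup.commutator_mem_commutator (Subgroup.mem_top g) (Subgroup.mem_top y)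
  intro x hx
  have hx' : x ∈ lowerPCentral p C c := hker ▸ hx
  exact ⟨hstem hx', hcentral hx'⟩
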